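/- For any v > 0, c > 0, and n ≥ 1, inf over 0 < s < 1/c of (log(2n) + s²v/(2(1 - cs)))/s equals √(2v·log(2n)) + c·log(2n). -/

import Mathlib

open Real

theorem subGamma_optimization (v c : ℝ) (hv : 0 < v) (hc : 0 < c) (n : ℕ) (hn : 1 ≤ n) :
    sInf ((fun s : ℝ => (Real.log (2 * n) + s ^ 2 * v / (2 * (1 - c * s))) / s) ''
        Set.Ioo 0 (1 / c)) =
      Real.sqrt (2 * v * Real.log (2 * n)) + c * Real.log (2 * n) := by
  set L := Real.log (2 * n) with hLdef
  have hL : 0 < L := by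
    apply Real.log_pos
    have h1 : (1:ℝ) ≤ n := by exact_mod_cast hn
    linarith
  set r := Real.sqrt (v / (2 * L)) with hrdef
  have hr : 0 < r := Real.sqrt_pos.mpr (by positivity)
  have hr2 : r ^ 2 = v / (2 * L) := Real.sq_sqrt (by positivity)
  have h2 : v = 2 * L * r ^ 2 := by
    field_simp at hr2; linarith
  have hM : Real.sqrt (2 * v * L) = 2 * L * r := by
    rw [show 2 * v * L = (2 * L * r) ^ 2 by nlinarith [h2]]
    exact Real.sqrt_sq (by positivity)
  have key : ∀ s ∈ Set.Ioo (0:ℝ) (1/c),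
      Real.sqrt (2*v*L) + c*L ≤ (L + s^2*v/(2*(1-c*s)))/s := by
    rintro s ⟨hs0, hs1⟩
    have h1 : 0 < 1 - c * s := by
      have h := (lt_div_iff₀ hc).mp hs1
      linarith
    set t := (1 - c*s)/s with htdef
    have ht : 0 < t := div_pos h1 hs0
    have heq : (L + s^2*v/(2*(1-c*s)))/s = c*L + (L*t + v/(2*t)) := by
      rw [htdef]; field_simp [(by rw [mul_comm]; exact h1.ne' : (1:ℝ) - s * c ≠ 0)]; ring
    rw [heq, hM]
    have hge : 2*L*r ≤ L*t + v/(2*t) := by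
      rw [← sub_nonneg]
      have : L*t + v/(2*t) - 2*L*r = L*(t-r)^2/t := by
        rw [h2]; field_simp; ring
      rw [this]; positivity
    linarith
  have hcr : 0 < c + r := by linarith
  have hsmem : (c + r)⁻¹ ∈ Set.Ioo (0:ℝ) (1/c) := by
    constructor
    · positivity
    · rw [one_div]
      exact (inv_lt_inv₀ (by linarith) hc).mpr (by linarith)
  have hval : (L + ((c+r)⁻¹)^2*v/(2*(1-c*(c+r)⁻¹)))/(c+r)⁻¹
      = Real.sqrt (2*v*L) + c*L := by
    rw [hM]
    have h1 : 1 - c*(c+r)⁻¹ = r/(c+r) := by field_simp; ring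
    rw [h1, h2]
    field_simp
    ring
  apply le_antisymm
  · apply csInf_le
    · exact ⟨Real.sqrt (2*v*L) + c*L, by rintro x ⟨s, hs, rfl⟩; exact key s hs⟩
    · exact ⟨(c+r)⁻¹, hsmem, hval⟩
  · apply le_csInf
    · exact ⟨_, ⟨(c+r)⁻¹, hsmem, rfl⟩⟩
    · rintro x ⟨s, hs, rfl⟩; exact key s hs
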